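/- Let I be a sifted category and C a category with finite limits and I-shaped colimits. If I-shaped colimits are universal in C (preserved by pullback along any morphism), then the colimit functor colim_I : Fun(I, C) → C preserves finite products. -/

import Mathlib

open CategoryTheory CategoryTheory.Limits

namespace Stmt2Aux

universe v₁ u₁ v₂ u₂

variable {I : Type u₁} [Category.{v₁} I]
variable {C : Type u₂} [Category.{v₂} C]

section Connected

/-- The identity cocone on a constant functor. -/
@[simps]
def constCocone (X : C) : Cocone ((Functor.const I).obj X) where
  pt := X
  ι := { app := fun _ => 𝟙 X }

/-- Over a connected category, the identity cocone on a constant functor is colimiting. -/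
noncomputable def isColimitConstCocone [IsConnected I] (X : C) :
    IsColimit (constCocone (I := I) X) where
  desc s := s.ι.app (Classical.arbitrary I)
  fac s j := by
    dsimp
    erw [Category.id_comp]
    exact (nat_trans_from_is_connected s.ι j (Classical.arbitrary I)).symm
  uniq s m h := by
    have := h (Classical.arbitrary I)
    dsimp at this
    erw [Category.id_comp] at this
    exact this

end Connected

section Terminal

variable [HasTerminal C]

/-- The terminal functor is isomorphic to the constant functor on the terminal object. -/
noncomputable def constTerminalIso :
    (⊤_ (I ⥤ C)) ≅ (Functor.const I).obj (⊤_ C) :=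
  NatIso.ofComponents
    (fun i => (isLimitOfHasTerminalOfPreservesLimit
        ((evaluation I C).obj i)).uniqueUpToIso terminalIsTerminal)
    (fun _ => terminalIsTerminal.hom_ext _ _)

/-- The colimit of the terminal functor is terminal. -/
noncomputable def colimTerminalIso [IsSifted I] [HasColimitsOfShape I C] :
    colim.obj (⊤_ (I ⥤ C)) ≅ ⊤_ C :=
  HasColimit.isoOfNatIso constTerminalIso ≪≫
    colimit.isoColimitCocone ⟨_, isColimitConstCocone (⊤_ C)⟩

end Terminal

section Prod

variable [HasBinaryProducts C]

/-- The left product functor is isomorphic to the right product functor, via braiding. -/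
noncomputable def prodSwapNatIso (Y : C) : prod.functor.obj Y ≅ prod.functor.flip.obj Y :=
  NatIso.ofComponents (fun X => prod.braiding Y X)
    (fun {A B} f => by
      change prod.map (𝟙 Y) f ≫ (prod.braiding Y B).hom = (prod.braiding Y A).hom ≫ prod.map f (𝟙 Y)
      apply Limits.prod.hom_ext <;> simp)

end Prod

section PullbackProd

variable [HasFiniteLimits C]

/-- The functor to the over category over the terminal object. -/
@[simps]
noncomputable def toOverTerminal : C ⥤ Over (⊤_ C) where
  obj Y := Over.mk (terminal.from Y)
  map f := Over.homMk f

/-- A category is equivalent to the over category over the terminal object. -/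
noncomputable def toOverTerminalEquiv : C ≌ Over (⊤_ C) where
  functor := toOverTerminal
  inverse := Over.forget _
  unitIso := NatIso.ofComponents (fun Y => Iso.refl Y)
    (fun f => (Category.comp_id f).trans (Category.id_comp f).symm)
  counitIso := NatIso.ofComponents
    (fun X => Over.isoMk (Iso.refl _) (terminalIsTerminal.hom_ext _ _))
    (fun f => by ext; exact (Category.comp_id _).trans (Category.id_comp _).symm)
  functor_unitIso_comp := by intro Y; ext; exact Category.comp_id _

theorem preservesColimitsOfShape_prodFunctor [HasColimitsOfShape I C]
    (univ : ∀ {X Z : C} (f : X ⟶ Z), PreservesColimitsOfShape I (Over.pullback f)) (X : C) :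
    PreservesColimitsOfShape I (prod.functor.obj X) := by
  haveI := univ (terminal.from X)
  haveI : PreservesColimitsOfShape I (toOverTerminal (C := C)) :=
    (toOverTerminalEquiv (C := C)).toAdjunction.leftAdjoint_preservesColimits.preservesColimitsOfShape
  haveI : PreservesColimitsOfShape I
      (toOverTerminal (C := C) ⋙ Over.pullback (terminal.from X) ⋙ Over.forget X) :=
    inferInstance
  refine preservesColimitsOfShape_of_natIso
    (F := toOverTerminal (C := C) ⋙ Over.pullback (terminal.from X) ⋙ Over.forget X) ?_
  exact NatIso.ofComponents
    (fun Y => pullbackSymmetry (terminal.from Y) (terminal.from X) ≪≫ (prodIsoPullback X Y).symm)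
    (fun f => by
      apply Limits.prod.hom_ext
      · erw [Category.assoc, Category.assoc, Iso.trans_hom, Iso.symm_hom, Category.assoc, prodIsoPullback_inv_fst, pullbackSymmetry_hom_comp_fst]
        erw [Iso.symm_hom, prod.map_fst, Category.comp_id, Category.assoc, prodIsoPullback_inv_fst, pullbackSymmetry_hom_comp_fst]
        erw [pullback.lift_snd]
        rfl
      · erw [Category.assoc, Category.assoc, Iso.trans_hom, Iso.symm_hom, Category.assoc, prodIsoPullback_inv_snd, pullbackSymmetry_hom_comp_snd]
        erw [Iso.symm_hom, prod.map_snd, Category.assoc, prodIsoPullback_inv_snd_assoc, pullbackSymmetry_hom_comp_snd_assoc]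
        erw [pullback.lift_fst]
        rfl)

end PullbackProd

section ProdDiagram

variable [HasBinaryProducts C] [HasColimitsOfShape I C]

/-- The external product diagram of two diagrams. -/
@[simps]
noncomputable def prodDiagram (F G : I ⥤ C) : I × I ⥤ C where
  obj p := F.obj p.1 ⨯ G.obj p.2
  map f := prod.map (F.map f.1) (G.map f.2)
  map_id := by intros; dsimp; apply Limits.prod.hom_ext <;> simp
  map_comp := by intros; dsimp; apply Limits.prod.hom_ext <;> simp

/-- The canonical cocone on the external product diagram with point the product of colimits. -/
@[simps]
noncomputable def prodDiagramCocone (F G : I ⥤ C) : Cocone (prodDiagram F G) where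
  pt := colimit F ⨯ colimit G
  ι :=
    { app := fun p => prod.map (colimit.ι F p.1) (colimit.ι G p.2)
      naturality := fun p q f => by
        dsimp
        change prod.map (F.map f.1) (G.map f.2) ≫ prod.map (colimit.ι F q.1) (colimit.ι G q.2) =
          prod.map (colimit.ι F p.1) (colimit.ι G p.2) ≫ 𝟙 _
        apply Limits.prod.hom_ext <;> simp }

/-- If both partial product functors preserve `I`-colimits, the canonical cocone is colimiting. -/
noncomputable def prodDiagramIsColimit
    (hP : ∀ X : C, PreservesColimitsOfShape I (prod.functor.obj X))
    (F G : I ⥤ C) : IsColimit (prodDiagramCocone F G) := by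
  have hQ : ∀ Y : C, PreservesColimitsOfShape I (prod.functor.flip.obj Y) := fun Y =>
    preservesColimitsOfShape_of_natIso (prodSwapNatIso Y)
  -- the inner colimits
  have inner : ∀ i : I,
      IsColimit ((prod.functor.obj (F.obj i)).mapCocone (colimit.cocone G)) := fun i => by
    letI := hP (F.obj i)
    exact isColimitOfPreserves _ (colimit.isColimit G)
  have outer : IsColimit ((prod.functor.flip.obj (colimit G)).mapCocone (colimit.cocone F)) := by
    letI := hQ (colimit G)
    exact isColimitOfPreserves _ (colimit.isColimit F)
  -- the inner cocones extracted from a cocone on the product diagram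
  let sInner : ∀ (s : Cocone (prodDiagram F G)) (i : I),
      Cocone (G ⋙ prod.functor.obj (F.obj i)) := fun s i =>
    { pt := s.pt
      ι :=
        { app := fun j => s.ι.app (i, j)
          naturality := fun j j' f => by
            have h := s.ι.naturality ((𝟙 i, f) : (⟨i, j⟩ : I × I) ⟶ ⟨i, j'⟩)
            dsimp at h ⊢
            simp at h
            exact h.trans (Category.comp_id _).symm } }
  let g : ∀ (s : Cocone (prodDiagram F G)) (i : I), (F.obj i ⨯ colimit G) ⟶ s.pt := fun s i =>
    (inner i).desc (sInner s i)
  have hg : ∀ (s : Cocone (prodDiagram F G)) (i : I) (j : I),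
      prod.map (𝟙 (F.obj i)) (colimit.ι G j) ≫ g s i = s.ι.app (i, j) := fun s i j => by
    have h := (inner i).fac (sInner s i) j
    dsimp at h ⊢
    exact h
  let sOuter : ∀ s : Cocone (prodDiagram F G),
      Cocone (F ⋙ prod.functor.flip.obj (colimit G)) := fun s =>
    { pt := s.pt
      ι :=
        { app := g s
          naturality := fun i i' f => by
            apply (inner i).hom_ext
            intro j
            have h1 := hg s i j
            have h2 := hg s i' j
            have h3 := s.ι.naturality ((f, 𝟙 j) : (⟨i, j⟩ : I × I) ⟶ ⟨i', j⟩)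
            dsimp at h1 h2 h3 ⊢
            simp only [Functor.map_id, Category.comp_id] at h3 ⊢
            calc prod.map (𝟙 (F.obj i)) (colimit.ι G j) ≫ prod.map (F.map f) (𝟙 (colimit G)) ≫ g s i'
                = (prod.map (F.map f) (𝟙 (G.obj j)) ≫ prod.map (𝟙 (F.obj i')) (colimit.ι G j)) ≫ g s i' := by
                  rw [← Category.assoc, prod.map_map, prod.map_map]
                  simp
              _ = prod.map (F.map f) (𝟙 (G.obj j)) ≫ s.ι.app (i', j) := by
                  rw [Category.assoc, h2]
              _ = (show F.obj i ⨯ G.obj j ⟶ s.pt from s.ι.app (i, j)) := by simp at h3; exact h3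
              _ = prod.map (𝟙 (F.obj i)) (colimit.ι G j) ≫ g s i ≫ 𝟙 s.pt :=
                  h1.symm.trans (congrArg (_ ≫ ·) (Category.comp_id (g s i)).symm) } }
  have hcollapse : ∀ i j : I,
      prod.map (𝟙 (F.obj i)) (colimit.ι G j) ≫ prod.map (colimit.ι F i) (𝟙 (colimit G)) =
        prod.map (colimit.ι F i) (colimit.ι G j) := fun i j => by
    rw [prod.map_map, Category.id_comp, Category.comp_id]
  have hfac : ∀ (s : Cocone (prodDiagram F G)) (p : I × I),
      (prodDiagramCocone F G).ι.app p ≫ outer.desc (sOuter s) = s.ι.app p := by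
    rintro s ⟨i, j⟩
    have h1 := outer.fac (sOuter s) i
    have h2 := hg s i j
    dsimp at h1 h2 ⊢
    change prod.map (colimit.ι F i) (colimit.ι G j) ≫ outer.desc (sOuter s) = s.ι.app (i, j)
    erw [← hcollapse, Category.assoc, h1]
    exact h2
  refine
    { desc := fun s => outer.desc (sOuter s)
      fac := hfac
      uniq := fun s m hm => ?_ }
  apply outer.hom_ext
  intro i
  apply (inner i).hom_ext
  intro j
  have h3 := hm (i, j)
  have h4 := hfac s (i, j)
  dsimp at h3 h4 ⊢
  erw [← Category.assoc, ← Category.assoc, hcollapse, h3, h4]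

end ProdDiagram

end Stmt2Aux

open Stmt2Aux

/-- Let `I` be a sifted category and `C` a category with finite
limits and `I`-shaped colimits.  If `I`-shaped colimits are universal in `C`
(i.e. pullback along any morphism preserves `I`-shaped colimits), then the
colimit functor `colim : (I ⥤ C) ⥤ C` preserves finite products. -/
theorem stmt_2 {I : Type*} [Category I] [IsSifted I]
    {C : Type*} [Category C] [HasFiniteLimits C] [HasColimitsOfShape I C]
    (univ : ∀ {X Z : C} (f : X ⟶ Z), PreservesColimitsOfShape I (Over.pullback f)) :
    PreservesFiniteProducts (colim : (I ⥤ C) ⥤ C) := by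
  have hP : ∀ X : C, PreservesColimitsOfShape I (prod.functor.obj X) := fun X =>
    preservesColimitsOfShape_prodFunctor @univ X
  -- binary products
  have key : ∀ F G : I ⥤ C, IsIso (prodComparison (colim : (I ⥤ C) ⥤ C) F G) := by
    intro F G
    have h1 : IsColimit ((prodDiagramCocone F G).whisker (Functor.diag I)) :=
      (Functor.Final.isColimitWhiskerEquiv (Functor.diag I) _).symm
        (prodDiagramIsColimit hP F G)
    let ι1 : (F ⨯ G : I ⥤ C) ≅ Functor.diag I ⋙ prodDiagram F G :=
      NatIso.ofComponents
        (fun i => PreservesLimitPair.iso ((evaluation I C).obj i) F G)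
        (fun {i i'} f => by
          apply Limits.prod.hom_ext
          · simp [prodComparison, NatTrans.naturality]
            erw [Category.assoc, prod.lift_fst, Category.assoc, prod.map_fst, prod.lift_fst_assoc]
            exact NatTrans.naturality _ _
          · simp [prodComparison, NatTrans.naturality]
            erw [Category.assoc, prod.lift_snd, Category.assoc, prod.map_snd, prod.lift_snd_assoc]
            exact NatTrans.naturality _ _)
    have h2 : IsColimit ((Cocone.precompose ι1.hom).obj
        ((prodDiagramCocone F G).whisker (Functor.diag I))) :=
      (IsColimit.precomposeHomEquiv ι1 _).symm h1
    have heq : prodComparison (colim : (I ⥤ C) ⥤ C) F G =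
        (colimit.isoColimitCocone ⟨_, h2⟩).hom := by
      apply colimit.hom_ext
      intro i
      erw [colimit.isoColimitCocone_ι_hom]
      dsimp [ι1]
      apply Limits.prod.hom_ext
      · simp [prodComparison, PreservesLimitPair.iso_hom, prodComparison_fst]
        erw [prod.lift_fst, Category.assoc, prod.map_fst]
        exact (prodComparison_fst_assoc ((evaluation I C).obj i) F G (colimit.ι F i)).symm
      · simp [prodComparison, PreservesLimitPair.iso_hom, prodComparison_snd]
        erw [prod.lift_snd, Category.assoc, prod.map_snd]
        exact (prodComparison_snd_assoc ((evaluation I C).obj i) F G (colimit.ι G i)).symm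
    rw [heq]
    exact Iso.isIso_hom _
  haveI : PreservesLimitsOfShape (Discrete WalkingPair) (colim : (I ⥤ C) ⥤ C) := by
    constructor
    intro K
    haveI : PreservesLimit (pair (K.obj ⟨WalkingPair.left⟩) (K.obj ⟨WalkingPair.right⟩))
        (colim : (I ⥤ C) ⥤ C) := by
      haveI := key (K.obj ⟨WalkingPair.left⟩) (K.obj ⟨WalkingPair.right⟩)
      exact PreservesLimitPair.of_iso_prod_comparison _ _ _
    exact preservesLimit_of_iso_diagram colim (diagramIsoPair K).symm
  haveI : PreservesLimit (Functor.empty.{0} (I ⥤ C)) (colim : (I ⥤ C) ⥤ C) :=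
    preservesTerminal_of_iso _ colimTerminalIso
  haveI : PreservesLimitsOfShape (Discrete PEmpty.{1}) (colim : (I ⥤ C) ⥤ C) :=
    preservesLimitsOfShape_pempty_of_preservesTerminal _
  haveI : HasFiniteProducts (I ⥤ C) := ⟨fun _ => inferInstance⟩
  exact PreservesFiniteProducts.of_preserves_binary_and_terminal colim
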